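/- Let K be a field, n ≥ 1, and p = (p_0, …, p_{n-1}) ∈ K^n. Then for A = F_p the crossover identity Σ_{k=0}^{n-1} g_k A^k (b + b_n p) + g_n A^n (b + b_n p) = Σ_{k=0}^{n-1} b_k A^k (g + g_n p) + b_n A^n (g + g_n p) holds for all b, g ∈ K^n and all scalars b_n, g_n ∈ K. -/

import Mathlib

open Matrix

/-- The second companion matrix `F_p` of `p ∈ K^{n+1}`: columns `0,…,n-1` are
`e_1,…,e_n` and the last column is `p`. -/
def companion {K : Type*} [Field K] {n : ℕ} (p : Fin (n + 1) → K) :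
    Matrix (Fin (n + 1)) (Fin (n + 1)) K :=
  Matrix.of fun i j => if j = Fin.last n then p i else if (i : ℕ) = (j : ℕ) + 1 then 1 else 0

/-- The reachability (Krylov) matrix `R(A, g) = [g, Ag, …, A^{n-1} g]`. -/
def krylov {K : Type*} [Field K] {n : ℕ} (A : Matrix (Fin n) (Fin n) K) (g : Fin n → K) :
    Matrix (Fin n) (Fin n) K :=
  Matrix.of fun i j => (A ^ (j : ℕ)).mulVec g i

/-- `b(A) = Σ_{i=0}^{n-1} b_i A^i`. -/
def polyEval {K : Type*} [Field K] {n : ℕ} (b : Fin n → K) (A : Matrix (Fin n) (Fin n) K) :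
    Matrix (Fin n) (Fin n) K :=
  ∑ i : Fin n, b i • A ^ (i : ℕ)
section Aux
variable {K : Type*} [Field K] {n : ℕ} (p : Fin (n + 1) → K)

lemma comp_pow_e0 : ∀ k : ℕ, (hk : k ≤ n) →
    (companion p ^ k).mulVec (Pi.single (0 : Fin (n+1)) 1) = Pi.single (⟨k, Nat.lt_succ_of_le hk⟩ : Fin (n+1)) 1 := by
  intro k
  induction k with
  | zero =>
      intro _
      rw [pow_zero, Matrix.one_mulVec]
      congr 1
  | succ m ih =>
      intro hk
      have hm : m ≤ n := Nat.le_of_succ_le hk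
      rw [pow_succ', ← Matrix.mulVec_mulVec, ih hm, Matrix.mulVec_single]
      funext i
      have hne : (⟨m, Nat.lt_succ_of_le hm⟩ : Fin (n+1)) ≠ Fin.last n := by
        simp [Fin.ext_iff, Fin.last]; omega
      simp only [Pi.smul_apply, Matrix.col_apply, op_smul_eq_mul, companion, Matrix.of_apply, if_neg hne, mul_one, Pi.single_apply]
      by_cases h : (i : ℕ) = m + 1
      · rw [if_pos h, if_pos (by simp [Fin.ext_iff, h])]
      · rw [if_neg h, if_neg (by simp [Fin.ext_iff]; omega)]

lemma comp_pow_succ_e0 :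
    (companion p ^ (n + 1)).mulVec (Pi.single (0 : Fin (n+1)) 1) = p := by
  rw [pow_succ', ← Matrix.mulVec_mulVec, comp_pow_e0 p n le_rfl, Matrix.mulVec_single]
  funext i
  have : (⟨n, Nat.lt_succ_of_le le_rfl⟩ : Fin (n+1)) = Fin.last n := rfl
  simp [companion, this]

end Aux

section Main
variable {K : Type*} [Field K] {n : ℕ} (p : Fin (n + 1) → K)

noncomputable def cpoly (c : Fin (n+1) → K) (cn : K) : Polynomial K :=
  (∑ k : Fin (n+1), Polynomial.C (c k) * Polynomial.X ^ (k : ℕ)) + Polynomial.C cn * Polynomial.X ^ (n + 1)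

lemma aeval_cpoly (c : Fin (n+1) → K) (cn : K) :
    (Polynomial.aeval (companion p) (cpoly c cn)) =
      (∑ k : Fin (n+1), c k • (companion p) ^ (k : ℕ)) + cn • (companion p) ^ (n + 1) := by
  simp [cpoly, Algebra.smul_def]

lemma aeval_cpoly_mulVec (c : Fin (n+1) → K) (cn : K) (v : Fin (n+1) → K) :
    (Polynomial.aeval (companion p) (cpoly c cn)).mulVec v =
      (∑ k : Fin (n+1), c k • ((companion p) ^ (k : ℕ)).mulVec v)
        + cn • ((companion p) ^ (n + 1)).mulVec v := by
  rw [aeval_cpoly, Matrix.add_mulVec, Matrix.smul_mulVec]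
  congr 1
  funext i
  simp only [Matrix.mulVec, dotProduct, Finset.sum_apply, Matrix.smul_apply,
    Matrix.sum_apply, Finset.sum_mul, Finset.mul_sum, smul_eq_mul, Pi.smul_apply, mul_assoc]
  rw [Finset.sum_comm]


lemma aeval_cpoly_e0 (c : Fin (n+1) → K) (cn : K) :
    (Polynomial.aeval (companion p) (cpoly c cn)).mulVec (Pi.single (0 : Fin (n+1)) 1) =
      c + cn • p := by
  rw [aeval_cpoly_mulVec, comp_pow_succ_e0]
  congr 1
  have h : ∀ k : Fin (n+1), ((companion p) ^ (k : ℕ)).mulVec (Pi.single (0 : Fin (n+1)) 1)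
      = Pi.single k 1 := by
    intro k
    rw [comp_pow_e0 p k (Nat.lt_succ_iff.mp k.isLt)]
  simp_rw [h]
  conv_rhs => rw [pi_eq_sum_univ c]
  refine Finset.sum_congr rfl fun k _ => ?_
  congr 1
  funext j
  simp [Pi.single_apply, eq_comm]

end Main

/-- For `A = F_p` the crossover identity
`Σ_{k=0}^n A^k g_k (b + b_n p) = Σ_{k=0}^n A^k b_k (g + g_n p)`
holds for all `b, g ∈ K^n` and all scalars `b_n, g_n ∈ K`. -/
theorem crossover_of_companion {K : Type*} [Field K] {n : ℕ} (p : Fin (n + 1) → K)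
    (b g : Fin (n + 1) → K) (bn gn : K) :
    (∑ k : Fin (n + 1), g k • ((companion p) ^ (k : ℕ)).mulVec (b + bn • p)) +
        gn • ((companion p) ^ (n + 1)).mulVec (b + bn • p) =
      (∑ k : Fin (n + 1), b k • ((companion p) ^ (k : ℕ)).mulVec (g + gn • p)) +
        bn • ((companion p) ^ (n + 1)).mulVec (g + gn • p) := by
  rw [← aeval_cpoly_mulVec p g gn (b + bn • p), ← aeval_cpoly_mulVec p b bn (g + gn • p),
    ← aeval_cpoly_e0 p b bn, ← aeval_cpoly_e0 p g gn, Matrix.mulVec_mulVec,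
    Matrix.mulVec_mulVec, ← _root_.map_mul, ← _root_.map_mul, mul_comm]
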